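/- Let k be a field of characteristic different from 2 and let q be the quadratic form q(x,y,z) = z² − xy on k³. For every A in GL_2(k) and every vector v = (x,y,z) in k³, one has q(ψ(A)·v) = q(v); that is, the matrices in the image of ψ preserve the quadratic form z² − xy exactly (not merely up to a scalar). -/

import Mathlib

/-- The map sending an invertible 2×2 matrix `[[α, β], [γ, δ]]` to
`(1/(αδ−βγ)) · [[α², β², 2αβ], [γ², δ², 2γδ], [αγ, βδ, βγ+αδ]]`. -/
noncomputable def psi {k : Type*} [Field k] (M : Matrix (Fin 2) (Fin 2) k) :
    Matrix (Fin 3) (Fin 3) k :=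
  (M.det)⁻¹ • !![M 0 0 ^ 2, M 0 1 ^ 2, 2 * (M 0 0 * M 0 1);
                 M 1 0 ^ 2, M 1 1 ^ 2, 2 * (M 1 0 * M 1 1);
                 M 0 0 * M 1 0, M 0 1 * M 1 1, M 0 1 * M 1 0 + M 0 0 * M 1 1]

/-- The matrices in the image of ψ preserve the quadratic form `q(x,y,z) = z² − xy`
exactly (not merely up to a scalar). -/
theorem psi_preserves_quadratic_form {k : Type*} [Field k] (h2 : (2 : k) ≠ 0)
    (A : Matrix (Fin 2) (Fin 2) k) (hA : IsUnit A.det) (v : Fin 3 → k) :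
    ((psi A).mulVec v) 2 ^ 2 - ((psi A).mulVec v) 0 * ((psi A).mulVec v) 1
      = v 2 ^ 2 - v 0 * v 1 := by
  have hd : A.det ≠ 0 := hA.ne_zero
  have hdet : A 0 0 * A 1 1 - A 0 1 * A 1 0 ≠ 0 := by
    rwa [Matrix.det_fin_two] at hd
  simp only [psi, Matrix.mulVec, dotProduct, Fin.sum_univ_three,
    Matrix.smul_apply, Matrix.cons_val', Matrix.cons_val_zero, Matrix.cons_val_one,
    Matrix.head_cons, Matrix.empty_val', Matrix.cons_val_fin_one, Matrix.head_fin_const,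
    Matrix.cons_val_two, Matrix.tail_cons, Matrix.det_fin_two, smul_eq_mul, Matrix.of_apply]
  field_simp
  ring
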